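/- For every natural number n ≥ 1, 2·(2/π)^{2n} < 2^{2n}·(2^{2n} − 1)·|B_{2n}|/(2n)! < 2·(2/π)^{2n}·(2^{2n} − 1)/(2^{2n} − 2). -/

import Mathlib

open Real

private lemma daniello_tel (n : ℕ) :
    ∑ k ∈ Finset.range n, (1 : ℝ) / ((k + 1) * (k + 2)) = 1 - 1 / (n + 1) := by
  induction n with
  | zero => simp
  | succ m ih =>
    rw [Finset.sum_range_succ, ih]
    have h1 : ((m : ℝ) + 1) ≠ 0 := by positivity
    have h2 : ((m : ℝ) + 2) ≠ 0 := by positivity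
    push_cast
    field_simp
    ring

set_option maxHeartbeats 1000000 in
theorem daniello_bernoulli_equiv (n : ℕ) (hn : 1 ≤ n) :
    2 * (2 / π) ^ (2 * n) <
      2 ^ (2 * n) * (2 ^ (2 * n) - 1) * |((bernoulli (2 * n) : ℚ) : ℝ)| /
        (Nat.factorial (2 * n) : ℝ) ∧
    2 ^ (2 * n) * (2 ^ (2 * n) - 1) * |((bernoulli (2 * n) : ℚ) : ℝ)| /
        (Nat.factorial (2 * n) : ℝ) <
      2 * (2 / π) ^ (2 * n) * ((2 ^ (2 * n) - 1) / (2 ^ (2 * n) - 2)) := by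
  have hn0 : n ≠ 0 := by omega
  set s := 2 * n with hs
  have hs2 : 2 ≤ s := by omega
  set f : ℕ → ℝ := fun m => 1 / (m : ℝ) ^ s with hf
  set B : ℝ := ((bernoulli s : ℚ) : ℝ) with hB
  have hpi : (0:ℝ) < π := Real.pi_pos
  set P : ℝ := π ^ s with hP
  have hPpos : 0 < P := by positivity
  set t : ℝ := 2 ^ s with ht
  have ht4 : (4:ℝ) ≤ t := by
    calc (4:ℝ) = 2 ^ 2 := by norm_num
    _ ≤ 2 ^ s := by exact pow_le_pow_right₀ (by norm_num) hs2
  have htpos : (0:ℝ) < t := by positivity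
  -- zeta value
  have h1 : HasSum f ((-1 : ℝ) ^ (n + 1) * (2 : ℝ) ^ (s - 1) * π ^ s *
      B / (s.factorial : ℝ)) := hasSum_zeta_nat hn0
  set Z : ℝ := (-1 : ℝ) ^ (n + 1) * (2 : ℝ) ^ (s - 1) * π ^ s * B / (s.factorial : ℝ) with hZ
  -- even part
  have hfe : ∀ k : ℕ, f (2 * k) = t⁻¹ * f k := by
    intro k
    simp only [hf]
    rw [ht]
    push_cast
    rw [mul_pow]
    rcases eq_or_ne k 0 with rfl | hk
    · simp [zero_pow (by omega : s ≠ 0)]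
    · have : ((k:ℝ))^s ≠ 0 := by positivity
      field_simp
  have he : HasSum (fun k => f (2 * k)) (t⁻¹ * Z) := by
    have := h1.mul_left t⁻¹
    simp only [hfe]
    exact this
  have hsumm : Summable f := h1.summable
  have hoS : Summable (fun k => f (2 * k + 1)) := by
    apply hsumm.comp_injective
    intro a b hab
    have : 2 * a + 1 = 2 * b + 1 := hab
    omega
  set g : ℕ → ℝ := fun k => f (2 * k + 1) with hg
  set L : ℝ := ∑' k, g k with hL
  have ho : HasSum g L := hoS.hasSum
  have heo : HasSum f (t⁻¹ * Z + L) := he.even_add_odd ho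
  have hZL : Z = t⁻¹ * Z + L := h1.unique heo
  have hZL' : Z * (t - 1) = t * L := by
    have ht0 : t ≠ 0 := ne_of_gt htpos
    field_simp at hZL ⊢
    nlinarith [hZL]
  -- f values at odd points
  have hfo : ∀ k : ℕ, g k = 1 / ((2 * (k:ℝ) + 1) ^ s) := by
    intro k; simp only [hg, hf]; push_cast; ring_nf
  -- L > 1
  have hL1 : 1 < L := by
    have h01 : g 0 + g 1 ≤ L := by
      have hnn : ∀ k : ℕ, k ∉ ({0, 1} : Finset ℕ) → 0 ≤ g k := by
        intro k _
        rw [hfo k]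
        positivity
      have := sum_le_hasSum ({0, 1} : Finset ℕ) hnn ho
      simpa using this
    have hf0 : g 0 = 1 := by rw [hfo 0]; norm_num
    have hf1 : (0:ℝ) < g 1 := by
      rw [hfo 1]
      positivity
    linarith
  -- upper bound on L
  set u : ℝ := 3 ^ s with hu
  have hupos : (0:ℝ) < u := by positivity
  have hLu : L ≤ 1 + 9 / (4 * u) := by
    have hg0 : g 0 = 1 := by rw [hfo 0]; norm_num
    have htail : HasSum (fun k => g (k + 1)) (L - 1) := by
      have h' : HasSum g ((L - 1) + ∑ i ∈ Finset.range 1, g i) := by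
        simpa [hg0] using ho
      exact (hasSum_nat_add_iff (f := g) 1).2 h'
    have hbd : ∀ m : ℕ, ∑ k ∈ Finset.range m, g (k + 1) ≤ 9 / (4 * u) := by
      intro m
      have hterm : ∀ k : ℕ, g (k + 1) ≤
          9 / (4 * u) * (1 / (((k:ℝ) + 1) * ((k:ℝ) + 2))) := by
        intro k
        rw [hfo (k + 1)]
        push_cast
        have hx : (0:ℝ) < 2 * (k:ℝ) + 3 := by positivity
        have hkey : 4 * ((k:ℝ) + 1) * ((k:ℝ) + 2) * u ≤ 9 * (2 * (k:ℝ) + 3) ^ s := by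
          have e1 : (2 * (k:ℝ) + 3) ^ s = (2 * (k:ℝ) + 3) ^ 2 * (2 * (k:ℝ) + 3) ^ (s - 2) := by
            rw [← pow_add]
            congr 1
            omega
          have e2 : u = 9 * (3:ℝ) ^ (s - 2) := by
            rw [hu]
            rw [show (9:ℝ) = 3 ^ 2 by norm_num, ← pow_add]
            congr 1
            omega
          have e3 : (3:ℝ) ^ (s - 2) ≤ (2 * (k:ℝ) + 3) ^ (s - 2) := by
            apply pow_le_pow_left₀ (by norm_num)
            linarith [Nat.cast_nonneg (α := ℝ) k]
          have e4 : 4 * ((k:ℝ) + 1) * ((k:ℝ) + 2) ≤ (2 * (k:ℝ) + 3) ^ 2 := by nlinarith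
          have e5 : (0:ℝ) ≤ (2 * (k:ℝ) + 3) ^ (s - 2) := by positivity
          calc 4 * ((k:ℝ) + 1) * ((k:ℝ) + 2) * u
              = 9 * (4 * ((k:ℝ) + 1) * ((k:ℝ) + 2)) * (3:ℝ) ^ (s - 2) := by rw [e2]; ring
            _ ≤ 9 * ((2 * (k:ℝ) + 3) ^ 2) * (2 * (k:ℝ) + 3) ^ (s - 2) := by
                apply mul_le_mul (by nlinarith) e3 (by positivity) (by positivity)
            _ = 9 * (2 * (k:ℝ) + 3) ^ s := by rw [e1]; ring
        have h2k : (0:ℝ) < (2 * (k:ℝ) + 3) ^ s := by positivity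
        have hden : (0:ℝ) < ((k:ℝ) + 1) * ((k:ℝ) + 2) := by positivity
        have hre : 2 * ((k:ℝ) + 1) + 1 = 2 * (k:ℝ) + 3 := by ring
        rw [hre, div_mul_div_comm, mul_one, div_le_div_iff₀ h2k (by positivity)]
        nlinarith
      calc ∑ k ∈ Finset.range m, g (k + 1)
          ≤ ∑ k ∈ Finset.range m, 9 / (4 * u) * (1 / (((k:ℝ) + 1) * ((k:ℝ) + 2))) :=
            Finset.sum_le_sum fun k _ => hterm k
        _ = 9 / (4 * u) * ∑ k ∈ Finset.range m, (1 : ℝ) / (((k:ℝ) + 1) * ((k:ℝ) + 2)) := by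
            rw [Finset.mul_sum]
        _ = 9 / (4 * u) * (1 - 1 / ((m:ℝ) + 1)) := by rw [daniello_tel]
        _ ≤ 9 / (4 * u) * 1 := by
            apply mul_le_mul_of_nonneg_left _ (by positivity)
            have : (0:ℝ) < (m:ℝ) + 1 := by positivity
            have : (0:ℝ) ≤ 1 / ((m:ℝ) + 1) := by positivity
            linarith
        _ = 9 / (4 * u) := by ring
    have := Real.tsum_le_of_sum_range_le (fun k => by positivity) hbd
    rw [htail.tsum_eq] at this
    linarith
  -- Z positive, sign of bernoulli
  have hZpos : 0 < Z := by
    nlinarith [hZL', hL1, htpos]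
  have hpow2 : (2:ℝ) ^ (s - 1) * 2 = t := by
    rw [ht, ← pow_succ]
    congr 1
    omega
  have hfac : (0:ℝ) < (s.factorial : ℝ) := by exact_mod_cast Nat.factorial_pos s
  have hsign : (-1 : ℝ) ^ (n + 1) * B = |B| := by
    have h' : 0 < (-1 : ℝ) ^ (n + 1) * B := by
      by_contra hcon
      push_neg at hcon
      have : Z ≤ 0 := by
        rw [hZ]
        apply div_nonpos_of_nonpos_of_nonneg _ hfac.le
        have : (-1 : ℝ) ^ (n + 1) * (2 : ℝ) ^ (s - 1) * π ^ s * B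
            = ((-1 : ℝ) ^ (n + 1) * B) * ((2 : ℝ) ^ (s - 1) * π ^ s) := by ring
        rw [this]
        exact mul_nonpos_of_nonpos_of_nonneg hcon (by positivity)
      linarith
    have habs : |(-1 : ℝ) ^ (n + 1) * B| = |B| := by
      rw [abs_mul, abs_pow, abs_neg, abs_one, one_pow, one_mul]
    rw [← habs, abs_of_pos h']
  have hZB : Z = |B| * (t / 2) * P / (s.factorial : ℝ) := by
    rw [hZ, hP]
    have hre : (-1 : ℝ) ^ (n + 1) * (2 : ℝ) ^ (s - 1) * π ^ s * B
        = ((-1 : ℝ) ^ (n + 1) * B) * (2 : ℝ) ^ (s - 1) * π ^ s := by ring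
    rw [hre, hsign]
    have : (2:ℝ) ^ (s - 1) = t / 2 := by
      rw [← hpow2]; ring
    rw [this]
  -- middle quantity
  have hmid : t * (t - 1) * |B| / (s.factorial : ℝ) = 2 * (t - 1) * Z / P := by
    rw [hZB]
    field_simp
  have hdivpow : (2 / π) ^ s = t / P := by
    rw [div_pow, ht, hP]
  clear_value g L Z B f t u P
  have h9u : 9 * t ≤ 4 * u := by
    rw [ht, hu, hs, pow_mul, pow_mul]
    norm_num
    have hmn : n = (n - 1) + 1 := by omega
    rw [hmn, pow_succ, pow_succ]
    have hle : (4:ℝ) ^ (n - 1) ≤ 9 ^ (n - 1) :=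
      pow_le_pow_left₀ (by norm_num) (by norm_num) _
    linarith [hle]
  clear_value s
  clear hs hs2 hf hg hB hL hu ht hP hZ hZL h1 he heo ho hoS hsumm hfe hfo hZB hsign hpow2 hfac hn0 hn
  constructor
  · rw [hmid, hdivpow]
    have : 2 * (t / P) = (2 * t) / P := by ring
    rw [this, div_lt_div_iff₀ hPpos hPpos]
    have h1' : 2 * t < 2 * (t - 1) * Z := by
      nlinarith [hZL', mul_pos htpos (sub_pos.mpr hL1)]
    nlinarith [mul_lt_mul_of_pos_right h1' hPpos]
  · rw [hmid, hdivpow]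
    -- L < (t-1)/(t-2)
    have hLlt : L * (t - 2) < t - 1 := by
      have h1' : 9 * (t - 2) < 4 * u := by linarith
      have : L * (t - 2) ≤ (1 + 9 / (4 * u)) * (t - 2) := by
        apply mul_le_mul_of_nonneg_right hLu (by linarith)
      have hexp : (1 + 9 / (4 * u)) * (t - 2) = (t - 2) + 9 * (t - 2) / (4 * u) := by ring
      have hfrac : 9 * (t - 2) / (4 * u) < 1 := by
        rw [div_lt_one (by positivity)]
        linarith
      calc L * (t - 2) ≤ (t - 2) + 9 * (t - 2) / (4 * u) := by rw [← hexp]; exact this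
        _ < (t - 2) + 1 := by linarith
        _ = t - 1 := by ring
    have ht2 : (0:ℝ) < t - 2 := by linarith
    have hkey : 2 * (t - 1) * Z < 2 * t * (t - 1) / (t - 2) := by
      rw [lt_div_iff₀ ht2]
      nlinarith [hZL', mul_lt_mul_of_pos_left hLlt (mul_pos (by norm_num : (0:ℝ) < 2) htpos)]
    have hrhs : 2 * (t / P) * ((t - 1) / (t - 2)) = (2 * t * (t - 1) / (t - 2)) / P := by
      rw [eq_div_iff (ne_of_gt hPpos)]
      field_simp
    rw [hrhs, div_lt_div_iff₀ hPpos hPpos]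
    nlinarith [mul_lt_mul_of_pos_right hkey hPpos]
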